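/- (Approximate performance difference for policy-dependent reward) Let π_b be a behavior policy of the fixed finite discounted MDP with π_b(s,a) > 0 for all (s,a). For any two policies π and π̃ with π(s,a) > 0 and π̃(s,a) > 0 for all (s,a), J_{C_π}(π) − J_{C_{π̃}}(π̃) ≤ (1−γ)^{-1} ∑_s d^{π̃}(s) ∑_a π(s,a) A^{π̃}_{C_{π̃}}(s,a) + (√2 γ ε_{π̃}/(1−γ)²) √(D^{π̃}_KL(π, π̃)) + (1−γ)^{-1} D^max_KL(π, π̃), where ε_{π̃} = max_{s,a} |A^{π̃}_{C_{π̃}}(s,a)|. -/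

import Mathlib

set_option linter.unusedSectionVars false
set_option maxHeartbeats 1000000


open Finset

/-- Time-`t` state distribution of policy `π` in the MDP with transitions `P`
and initial distribution `μ`. -/
noncomputable def pDist {S A : Type*} [Fintype S] [Fintype A]
    (P : S → A → S → ℝ) (μ : S → ℝ) (π : S → A → ℝ) : ℕ → S → ℝ
  | 0 => μ
  | t + 1 => fun s' => ∑ s, ∑ a, pDist P μ π t s * π s a * P s a s'

/-- Discounted state visitation distribution `d^π`. -/
noncomputable def dvisit {S A : Type*} [Fintype S] [Fintype A]
    (P : S → A → S → ℝ) (μ : S → ℝ) (γ : ℝ) (π : S → A → ℝ) (s : S) : ℝ :=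
  (1 - γ) * ∑' t : ℕ, γ ^ t * pDist P μ π t s

/-- Discounted return `J_R(π)`. -/
noncomputable def Jret {S A : Type*} [Fintype S] [Fintype A]
    (P : S → A → S → ℝ) (μ : S → ℝ) (γ : ℝ) (R : S → A → ℝ) (π : S → A → ℝ) : ℝ :=
  ∑' t : ℕ, γ ^ t * ∑ s, ∑ a, pDist P μ π t s * π s a * R s a

/-- Advantage function `A_R^π(s,a) = Q_R^π(s,a) - V_R^π(s)`, expressed in terms of
the value function `V` of the policy. -/
noncomputable def Adv {S A : Type*} [Fintype S]
    (P : S → A → S → ℝ) (γ : ℝ) (R : S → A → ℝ) (V : S → ℝ) (s : S) (a : A) : ℝ :=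
  (R s a + γ * ∑ s', P s a s' * V s') - V s

/-- KL divergence between two distributions on a finite type. -/
noncomputable def KL {X : Type*} [Fintype X] (p q : X → ℝ) : ℝ :=
  ∑ x, p x * Real.log (p x / q x)

/-- Total variation distance between two distributions on a finite type. -/
noncomputable def TV {X : Type*} [Fintype X] (p q : X → ℝ) : ℝ :=
  (1 / 2) * ∑ x, |p x - q x|



private noncomputable def pk (x : ℝ) : ℝ :=
  (x + 2) * (x * Real.log x - x + 1) - 3/2 * (x - 1)^2

private noncomputable def pk' (x : ℝ) : ℝ :=
  (2*x + 2) * Real.log x - 4*x + 4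

private lemma pk_hasDeriv {x : ℝ} (hx : 0 < x) : HasDerivAt pk (pk' x) x := by
  have h1 : HasDerivAt (fun x : ℝ => x * Real.log x) (Real.log x + 1) x :=
    Real.hasDerivAt_mul_log hx.ne'
  have h2 : HasDerivAt (fun x : ℝ => x * Real.log x - x + 1) (Real.log x) x := by
    have := (h1.sub (hasDerivAt_id x)).add_const 1
    simpa using this
  have h3 : HasDerivAt (fun x : ℝ => x + 2) 1 x := by
    simpa using (hasDerivAt_id x).add_const 2
  have h4 := h3.mul h2
  have h5 : HasDerivAt (fun x : ℝ => 3/2 * (x - 1)^2) (3 * (x - 1)) x := by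
    have h6 : HasDerivAt (fun x : ℝ => (x - 1)^2) (2 * (x-1)) x := by
      have := ((hasDerivAt_id x).sub_const 1).pow 2
      simp at this; exact this
    have := h6.const_mul (3/2 : ℝ)
    exact this.congr_deriv (by ring)
  have := h4.sub h5
  refine this.congr_deriv ?_
  unfold pk'; ring

private lemma pk'_hasDeriv {x : ℝ} (hx : 0 < x) :
    HasDerivAt pk' (2 * Real.log x + 2/x - 2) x := by
  have h1 : HasDerivAt (fun x : ℝ => 2*x + 2) 2 x := by
    simpa using ((hasDerivAt_id x).const_mul 2).add_const 2
  have h2 := h1.mul (Real.hasDerivAt_log hx.ne')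
  have h3 : HasDerivAt (fun x : ℝ => 4*x - 4) 4 x := by
    simpa using ((hasDerivAt_id x).const_mul 4).sub_const 4
  have := h2.sub h3
  have he : ∀ y : ℝ, (2*y+2) * Real.log y - (4*y - 4) = pk' y := by
    intro y; unfold pk'; ring
  have h4 : HasDerivAt pk' (2 * Real.log x + (2*x+2)*(1/x) - 4) x := by
    refine HasDerivAt.congr_deriv (this.congr_of_eventuallyEq ?_) ?_
    · filter_upwards with y using (he y).symm
    · ring
  convert h4 using 1
  field_simp
  ring

private lemma pk''_nonneg {x : ℝ} (hx : 0 < x) : 0 ≤ 2 * Real.log x + 2/x - 2 := by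
  have h := Real.log_le_sub_one_of_pos (x := x⁻¹) (by positivity)
  rw [Real.log_inv] at h
  have hx2 : 2/x = 2 * x⁻¹ := by rw [div_eq_mul_inv]
  rw [hx2]; linarith

private lemma pk'_sign {x : ℝ} (hx : 0 < x) : (x ≤ 1 → pk' x ≤ 0) ∧ (1 ≤ x → 0 ≤ pk' x) := by
  have hmono : MonotoneOn pk' (Set.Ioi (0:ℝ)) := by
    apply monotoneOn_of_deriv_nonneg (convex_Ioi 0)
    · exact fun y hy => ((pk'_hasDeriv hy).differentiableAt).continuousAt.continuousWithinAt
    · intro y hy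
      rw [interior_Ioi] at hy
      exact ((pk'_hasDeriv hy).differentiableAt).differentiableWithinAt
    · intro y hy
      rw [interior_Ioi] at hy
      rw [(pk'_hasDeriv hy).deriv]
      exact pk''_nonneg hy
  have h1 : pk' 1 = 0 := by unfold pk'; simp
  constructor
  · intro hx1
    have := hmono hx (by norm_num : (1:ℝ) ∈ Set.Ioi 0) hx1
    linarith
  · intro hx1
    have := hmono (by norm_num : (1:ℝ) ∈ Set.Ioi 0) hx hx1
    linarith

private lemma pk_nonneg {x : ℝ} (hx : 0 < x) : 0 ≤ pk x := by
  have hcont : ∀ s : Set ℝ, s ⊆ Set.Ioi 0 → ContinuousOn pk s := by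
    intro s hs
    intro y hy
    exact ((pk_hasDeriv (hs hy)).differentiableAt).continuousAt.continuousWithinAt
  have h1 : pk 1 = 0 := by unfold pk; simp
  rcases le_total x 1 with hx1 | hx1
  · have hanti : AntitoneOn pk (Set.Icc x 1) := by
      apply antitoneOn_of_deriv_nonpos (convex_Icc x 1)
      · exact hcont _ (fun y hy => lt_of_lt_of_le hx hy.1)
      · intro y hy
        rw [interior_Icc] at hy
        exact ((pk_hasDeriv (lt_trans hx hy.1)).differentiableAt).differentiableWithinAt
      · intro y hy
        rw [interior_Icc] at hy
        rw [(pk_hasDeriv (lt_trans hx hy.1)).deriv]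
        exact (pk'_sign (lt_trans hx hy.1)).1 hy.2.le
    have := hanti (Set.left_mem_Icc.2 hx1) (Set.right_mem_Icc.2 hx1) hx1
    linarith
  · have hmono : MonotoneOn pk (Set.Icc 1 x) := by
      apply monotoneOn_of_deriv_nonneg (convex_Icc 1 x)
      · exact hcont _ (fun y hy => lt_of_lt_of_le one_pos hy.1)
      · intro y hy
        rw [interior_Icc] at hy
        exact ((pk_hasDeriv (lt_trans one_pos hy.1)).differentiableAt).differentiableWithinAt
      · intro y hy
        rw [interior_Icc] at hy
        rw [(pk_hasDeriv (lt_trans one_pos hy.1)).deriv]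
        exact (pk'_sign (lt_trans one_pos hy.1)).2 hy.1.le
    have := hmono (Set.left_mem_Icc.2 hx1) (Set.right_mem_Icc.2 hx1) hx1
    linarith

/-- pointwise Pinsker core: for p,q > 0, 3(p−q)² ≤ 2(p+2q)(p log(p/q) − p + q). -/
private lemma pinsker_pointwise {p q : ℝ} (hp : 0 < p) (hq : 0 < q) :
    3 * (p - q)^2 ≤ 2 * (p + 2*q) * (p * Real.log (p/q) - p + q) := by
  have hx : 0 < p / q := by positivity
  have h := pk_nonneg hx
  unfold pk at h
  have hlog : Real.log (p/q) = Real.log (p/q) := rfl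
  have hq' : q ≠ 0 := hq.ne'
  have h2 : 0 ≤ (p/q + 2) * (p/q * Real.log (p/q) - p/q + 1) - 3/2 * (p/q - 1)^2 := h
  have h3 := mul_le_mul_of_nonneg_left h2 (le_of_lt (by positivity : (0:ℝ) < q^2))
  rw [mul_zero] at h3
  have : q^2 * ((p/q + 2) * (p/q * Real.log (p/q) - p/q + 1) - 3/2 * (p/q - 1)^2)
      = (p + 2*q) * (p * Real.log (p/q) - p + q) - 3/2 * (p - q)^2 := by
    field_simp
  rw [this] at h3
  linarith

private lemma pinsker_sum {X : Type*} [Fintype X] (p q : X → ℝ)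
    (hp : ∀ x, 0 < p x) (hq : ∀ x, 0 < q x)
    (hp1 : ∑ x, p x = 1) (hq1 : ∑ x, q x = 1) :
    (∑ x, |p x - q x|)^2 ≤ 2 * ∑ x, p x * Real.log (p x / q x) := by
  have hw : ∀ x, (0:ℝ) < p x + 2 * q x := fun x => by have := hp x; have := hq x; linarith
  have cs := Finset.sum_mul_sq_le_sq_mul_sq Finset.univ
    (fun x => |p x - q x| / Real.sqrt (p x + 2 * q x))
    (fun x => Real.sqrt (p x + 2 * q x))
  have he1 : ∀ x : X, |p x - q x| / Real.sqrt (p x + 2*q x) * Real.sqrt (p x + 2*q x)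
      = |p x - q x| := by
    intro x
    rw [div_mul_cancel₀]
    exact (Real.sqrt_pos.2 (hw x)).ne'
  have he2 : ∀ x : X, (|p x - q x| / Real.sqrt (p x + 2*q x))^2
      = (p x - q x)^2 / (p x + 2*q x) := by
    intro x
    rw [div_pow, Real.sq_sqrt (hw x).le, sq_abs]
  have he3 : ∀ x : X, (Real.sqrt (p x + 2*q x))^2 = p x + 2*q x := fun x =>
    Real.sq_sqrt (hw x).le
  simp only [he1, he2, he3] at cs
  have hsum3 : ∑ x : X, (p x + 2*q x) = 3 := by
    rw [Finset.sum_add_distrib, ← Finset.mul_sum, hp1, hq1]; norm_num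
  rw [hsum3] at cs
  have hptw : ∀ x : X, (p x - q x)^2 / (p x + 2*q x)
      ≤ (2/3) * (p x * Real.log (p x / q x) - p x + q x) := by
    intro x
    rw [div_le_iff₀ (hw x)]
    have := pinsker_pointwise (hp x) (hq x)
    nlinarith
  have hs := Finset.sum_le_sum (s := Finset.univ) (fun x _ => hptw x)
  have : (∑ x, |p x - q x|)^2 ≤ ((2:ℝ)/3) * (∑ x, (p x * Real.log (p x / q x) - p x + q x)) * 3 := by
    calc (∑ x, |p x - q x|)^2 ≤ (∑ x, (p x - q x)^2 / (p x + 2*q x)) * 3 := cs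
    _ ≤ ((2:ℝ)/3) * (∑ x, (p x * Real.log (p x / q x) - p x + q x)) * 3 := by
        rw [Finset.mul_sum]
        exact mul_le_mul_of_nonneg_right hs (by norm_num)
  calc (∑ x, |p x - q x|)^2
      ≤ ((2:ℝ)/3) * (∑ x, (p x * Real.log (p x / q x) - p x + q x)) * 3 := this
    _ = 2 * ∑ x, p x * Real.log (p x / q x) := by
        have hsplit : ∑ x, (p x * Real.log (p x / q x) - p x + q x)
            = (∑ x, p x * Real.log (p x / q x)) - (∑ x, p x) + (∑ x, q x) := by
          rw [Finset.sum_add_distrib, Finset.sum_sub_distrib]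
        rw [hsplit, hp1, hq1]; ring



section MDP
variable {S A : Type*} [Fintype S] [Fintype A]
variable {P : S → A → S → ℝ} {μ : S → ℝ} {ρ : S → A → ℝ}

private lemma pDist_nonneg (hP0 : ∀ s a s', 0 ≤ P s a s') (hμ0 : ∀ s, 0 ≤ μ s)
    (hρ0 : ∀ s a, 0 ≤ ρ s a) : ∀ t s, 0 ≤ pDist P μ ρ t s := by
  intro t
  induction t with
  | zero => exact hμ0
  | succ t ih =>
    intro s'
    simp only [pDist]
    exact Finset.sum_nonneg fun s _ => Finset.sum_nonneg fun a _ =>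
      mul_nonneg (mul_nonneg (ih s) (hρ0 s a)) (hP0 s a s')

private lemma pDist_sum (hP1 : ∀ s a, ∑ s', P s a s' = 1) (hμ1 : ∑ s, μ s = 1)
    (hρ1 : ∀ s, ∑ a, ρ s a = 1) : ∀ t, ∑ s, pDist P μ ρ t s = 1 := by
  intro t
  induction t with
  | zero => exact hμ1
  | succ t ih =>
    simp only [pDist]
    rw [Finset.sum_comm]
    calc ∑ s, ∑ s', ∑ a, pDist P μ ρ t s * ρ s a * P s a s'
        = ∑ s, ∑ a, ∑ s', pDist P μ ρ t s * ρ s a * P s a s' := by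
          exact Finset.sum_congr rfl fun s _ => Finset.sum_comm
      _ = ∑ s, ∑ a, pDist P μ ρ t s * ρ s a := by
          refine Finset.sum_congr rfl fun s _ => Finset.sum_congr rfl fun a _ => ?_
          rw [← Finset.mul_sum, hP1, mul_one]
      _ = ∑ s, pDist P μ ρ t s := by
          refine Finset.sum_congr rfl fun s _ => ?_
          rw [← Finset.mul_sum, hρ1, mul_one]
      _ = 1 := ih

/-- weighted average bound -/
private lemma wavg_abs_le {X : Type*} [Fintype X] {w f : X → ℝ} {M : ℝ}
    (hw : ∀ x, 0 ≤ w x) (hw1 : ∑ x, w x ≤ 1) (hM : 0 ≤ M) (hf : ∀ x, |f x| ≤ M) :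
    |∑ x, w x * f x| ≤ M := by
  calc |∑ x, w x * f x| ≤ ∑ x, |w x * f x| := Finset.abs_sum_le_sum_abs _ _
    _ = ∑ x, w x * |f x| := by
        refine Finset.sum_congr rfl fun x _ => ?_
        rw [abs_mul, abs_of_nonneg (hw x)]
    _ ≤ ∑ x, w x * M := Finset.sum_le_sum fun x _ => mul_le_mul_of_nonneg_left (hf x) (hw x)
    _ = (∑ x, w x) * M := by rw [← Finset.sum_mul]
    _ ≤ 1 * M := mul_le_mul_of_nonneg_right hw1 hM
    _ = M := one_mul M

/-- Summability of geometric-dominated sequences. -/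
private lemma summable_geom_dom {f : ℕ → ℝ} {γ M : ℝ} (hγ0 : 0 ≤ γ) (hγ1 : γ < 1)
    (hf : ∀ t, |f t| ≤ M * γ ^ t) : Summable f := by
  refine Summable.of_norm_bounded ?_ hf
  exact (summable_geometric_of_lt_one hγ0 hγ1).mul_left M

end MDP

section MDP2
variable {S A : Type*} [Fintype S] [Fintype A]
variable {P : S → A → S → ℝ} {μ : S → ℝ} {ρ : S → A → ℝ} {γ : ℝ}

private lemma double_wavg_bound {w : S → ℝ} (hw0 : ∀ s, 0 ≤ w s) (hw1 : ∑ s, w s = 1)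
    (hρ0 : ∀ s a, 0 ≤ ρ s a) (hρ1 : ∀ s, ∑ a, ρ s a = 1) (R : S → A → ℝ) :
    |∑ s, ∑ a, w s * ρ s a * R s a| ≤ ∑ s, ∑ a, |R s a| := by
  set C := ∑ s, ∑ a, |R s a| with hCdef
  have hC : 0 ≤ C := Finset.sum_nonneg fun s _ => Finset.sum_nonneg fun a _ => abs_nonneg _
  have hR : ∀ s a, |R s a| ≤ C := by
    intro s a
    calc |R s a| ≤ ∑ a, |R s a| :=
          Finset.single_le_sum (f := fun a => |R s a|) (fun a _ => abs_nonneg _) (Finset.mem_univ a)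
      _ ≤ C := Finset.single_le_sum (f := fun s => ∑ a, |R s a|)
          (fun s _ => Finset.sum_nonneg fun a _ => abs_nonneg _) (Finset.mem_univ s)
  have h1 : ∀ s, |∑ a, ρ s a * R s a| ≤ C := fun s =>
    wavg_abs_le (fun a => hρ0 s a) (le_of_eq (hρ1 s)) hC (fun a => hR s a)
  have h2 : ∑ s, ∑ a, w s * ρ s a * R s a = ∑ s, w s * ∑ a, ρ s a * R s a := by
    refine Finset.sum_congr rfl fun s _ => ?_
    rw [Finset.mul_sum]
    exact Finset.sum_congr rfl fun a _ => by ring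
  rw [h2]
  exact wavg_abs_le hw0 (le_of_eq hw1) hC h1

private lemma pDist_le_one (hP0 : ∀ s a s', 0 ≤ P s a s') (hP1 : ∀ s a, ∑ s', P s a s' = 1)
    (hμ0 : ∀ s, 0 ≤ μ s) (hμ1 : ∑ s, μ s = 1)
    (hρ0 : ∀ s a, 0 ≤ ρ s a) (hρ1 : ∀ s, ∑ a, ρ s a = 1) (t : ℕ) (s : S) :
    pDist P μ ρ t s ≤ 1 := by
  calc pDist P μ ρ t s ≤ ∑ s, pDist P μ ρ t s :=
        Finset.single_le_sum (fun s _ => pDist_nonneg hP0 hμ0 hρ0 t s) (Finset.mem_univ s)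
    _ = 1 := pDist_sum hP1 hμ1 hρ1 t

/-- summability of the generic return series -/
private lemma summable_Jterm (hP0 : ∀ s a s', 0 ≤ P s a s') (hP1 : ∀ s a, ∑ s', P s a s' = 1)
    (hμ0 : ∀ s, 0 ≤ μ s) (hμ1 : ∑ s, μ s = 1)
    (hρ0 : ∀ s a, 0 ≤ ρ s a) (hρ1 : ∀ s, ∑ a, ρ s a = 1)
    (hγ0 : 0 ≤ γ) (hγ1 : γ < 1) (R : S → A → ℝ) :
    Summable (fun t => γ ^ t * ∑ s, ∑ a, pDist P μ ρ t s * ρ s a * R s a) := by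
  apply summable_geom_dom hγ0 hγ1 (M := ∑ s, ∑ a, |R s a|)
  intro t
  rw [abs_mul, abs_pow, abs_of_nonneg hγ0, mul_comm]
  exact mul_le_mul_of_nonneg_right
    (double_wavg_bound (fun s => pDist_nonneg hP0 hμ0 hρ0 t s) (pDist_sum hP1 hμ1 hρ1 t)
      hρ0 hρ1 R) (pow_nonneg hγ0 t)

/-- summability of weighted state-function series -/
private lemma summable_pterm (hP0 : ∀ s a s', 0 ≤ P s a s') (hP1 : ∀ s a, ∑ s', P s a s' = 1)
    (hμ0 : ∀ s, 0 ≤ μ s) (hμ1 : ∑ s, μ s = 1)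
    (hρ0 : ∀ s a, 0 ≤ ρ s a) (hρ1 : ∀ s, ∑ a, ρ s a = 1)
    (hγ0 : 0 ≤ γ) (hγ1 : γ < 1) (f : S → ℝ) :
    Summable (fun t => γ ^ t * ∑ s, pDist P μ ρ t s * f s) := by
  apply summable_geom_dom hγ0 hγ1 (M := ∑ s, |f s|)
  intro t
  rw [abs_mul, abs_pow, abs_of_nonneg hγ0, mul_comm]
  refine mul_le_mul_of_nonneg_right ?_ (pow_nonneg hγ0 t)
  refine wavg_abs_le (fun s => pDist_nonneg hP0 hμ0 hρ0 t s)
    (le_of_eq (pDist_sum hP1 hμ1 hρ1 t))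
    (Finset.sum_nonneg fun s _ => abs_nonneg _) (fun s => ?_)
  exact Finset.single_le_sum (f := fun s => |f s|) (fun s _ => abs_nonneg _) (Finset.mem_univ s)

/-- the `W`-shift identity. -/
private lemma W_shift (V : S → ℝ) (t : ℕ) :
    γ ^ (t+1) * ∑ s', pDist P μ ρ (t+1) s' * V s'
      = γ ^ t * ∑ s, ∑ a, pDist P μ ρ t s * ρ s a * (γ * ∑ s', P s a s' * V s') := by
  simp only [pDist, pow_succ]
  rw [mul_assoc]
  congr 1
  calc γ * ∑ s', (∑ s, ∑ a, pDist P μ ρ t s * ρ s a * P s a s') * V s'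
      = ∑ s', ∑ s, ∑ a, γ * (pDist P μ ρ t s * ρ s a * P s a s' * V s') := by
        rw [Finset.mul_sum]
        refine Finset.sum_congr rfl fun s' _ => ?_
        rw [Finset.sum_mul, Finset.mul_sum]
        refine Finset.sum_congr rfl fun s _ => ?_
        rw [Finset.sum_mul, Finset.mul_sum]
    _ = ∑ s, ∑ s', ∑ a, γ * (pDist P μ ρ t s * ρ s a * P s a s' * V s') := Finset.sum_comm
    _ = ∑ s, ∑ a, ∑ s', γ * (pDist P μ ρ t s * ρ s a * P s a s' * V s') :=
        Finset.sum_congr rfl fun s _ => Finset.sum_comm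
    _ = ∑ s, ∑ a, pDist P μ ρ t s * ρ s a * (γ * ∑ s', P s a s' * V s') := by
        refine Finset.sum_congr rfl fun s _ => Finset.sum_congr rfl fun a _ => ?_
        rw [Finset.mul_sum, Finset.mul_sum]
        exact Finset.sum_congr rfl fun s' _ => by ring

end MDP2

section MDP3
variable {S A : Type*} [Fintype S] [Fintype A]
variable {P : S → A → S → ℝ} {μ : S → ℝ} {ρ : S → A → ℝ} {γ : ℝ}

private lemma tsum_telescope {f : ℕ → ℝ} (hf : Summable f) :
    ∑' t, (f t - f (t+1)) = f 0 := by
  have h1 : Summable (fun t => f (t+1)) := (summable_nat_add_iff 1).2 hf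
  rw [Summable.tsum_sub hf h1, Summable.tsum_eq_zero_add hf]
  ring

private lemma J_eq_muV (hP0 : ∀ s a s', 0 ≤ P s a s') (hP1 : ∀ s a, ∑ s', P s a s' = 1)
    (hμ0 : ∀ s, 0 ≤ μ s) (hμ1 : ∑ s, μ s = 1)
    (hρ0 : ∀ s a, 0 ≤ ρ s a) (hρ1 : ∀ s, ∑ a, ρ s a = 1)
    (hγ0 : 0 ≤ γ) (hγ1 : γ < 1) (R : S → A → ℝ) (V : S → ℝ)
    (hV : ∀ s, V s = ∑ a, ρ s a * (R s a + γ * ∑ s', P s a s' * V s')) :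
    ∑' t, γ ^ t * ∑ s, ∑ a, pDist P μ ρ t s * ρ s a * R s a = ∑ s, μ s * V s := by
  set W : ℕ → ℝ := fun t => γ ^ t * ∑ s, pDist P μ ρ t s * V s with hWdef
  have hW : Summable W := summable_pterm hP0 hP1 hμ0 hμ1 hρ0 hρ1 hγ0 hγ1 V
  have key : ∀ t, γ ^ t * ∑ s, ∑ a, pDist P μ ρ t s * ρ s a * R s a = W t - W (t+1) := by
    intro t
    have e1 : ∑ s, pDist P μ ρ t s * V s
        = ∑ s, ∑ a, (pDist P μ ρ t s * ρ s a * R s a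
            + pDist P μ ρ t s * ρ s a * (γ * ∑ s', P s a s' * V s')) := by
      refine Finset.sum_congr rfl fun s _ => ?_
      rw [hV s, Finset.mul_sum]
      exact Finset.sum_congr rfl fun a _ => by ring
    have e2 : W t = γ ^ t * ∑ s, ∑ a, pDist P μ ρ t s * ρ s a * R s a + W (t+1) := by
      have hs := W_shift (P := P) (μ := μ) (ρ := ρ) (γ := γ) V t
      simp only [hWdef]
      rw [e1]
      simp only [Finset.sum_add_distrib]
      rw [mul_add, ← hs]
    linarith [e2]
  rw [tsum_congr key, tsum_telescope hW]
  simp [hWdef, pDist]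

private lemma perf_diff (hP0 : ∀ s a s', 0 ≤ P s a s') (hP1 : ∀ s a, ∑ s', P s a s' = 1)
    (hμ0 : ∀ s, 0 ≤ μ s) (hμ1 : ∑ s, μ s = 1)
    (hρ0 : ∀ s a, 0 ≤ ρ s a) (hρ1 : ∀ s, ∑ a, ρ s a = 1)
    (hγ0 : 0 ≤ γ) (hγ1 : γ < 1) (R : S → A → ℝ) (V : S → ℝ) :
    ∑' t, γ ^ t * ∑ s, pDist P μ ρ t s *
        (∑ a, ρ s a * ((R s a + γ * ∑ s', P s a s' * V s') - V s))
      = (∑' t, γ ^ t * ∑ s, ∑ a, pDist P μ ρ t s * ρ s a * R s a) - ∑ s, μ s * V s := by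
  set W : ℕ → ℝ := fun t => γ ^ t * ∑ s, pDist P μ ρ t s * V s with hWdef
  have hW : Summable W := summable_pterm hP0 hP1 hμ0 hμ1 hρ0 hρ1 hγ0 hγ1 V
  have hg : Summable (fun t => γ ^ t * ∑ s, ∑ a, pDist P μ ρ t s * ρ s a * R s a) :=
    summable_Jterm hP0 hP1 hμ0 hμ1 hρ0 hρ1 hγ0 hγ1 R
  have key : ∀ t, γ ^ t * ∑ s, pDist P μ ρ t s *
        (∑ a, ρ s a * ((R s a + γ * ∑ s', P s a s' * V s') - V s))
      = (γ ^ t * ∑ s, ∑ a, pDist P μ ρ t s * ρ s a * R s a) - (W t - W (t+1)) := by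
    intro t
    have e1 : ∀ s, pDist P μ ρ t s *
          (∑ a, ρ s a * ((R s a + γ * ∑ s', P s a s' * V s') - V s))
        = (∑ a, (pDist P μ ρ t s * ρ s a * R s a
            + pDist P μ ρ t s * ρ s a * (γ * ∑ s', P s a s' * V s')))
          - pDist P μ ρ t s * V s := by
      intro s
      have e0 : ∑ a, ρ s a * ((R s a + γ * ∑ s', P s a s' * V s') - V s)
          = (∑ a, (ρ s a * R s a + ρ s a * (γ * ∑ s', P s a s' * V s')))
            - (∑ a, ρ s a) * V s := by
        rw [Finset.sum_mul, ← Finset.sum_sub_distrib]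
        exact Finset.sum_congr rfl fun a _ => by ring
      rw [e0, hρ1 s, one_mul, mul_sub, Finset.mul_sum]
      congr 1
      exact Finset.sum_congr rfl fun a _ => by ring
    have hs := W_shift (P := P) (μ := μ) (ρ := ρ) (γ := γ) V t
    rw [Finset.sum_congr rfl fun s _ => e1 s, Finset.sum_sub_distrib]
    simp only [Finset.sum_add_distrib]
    rw [mul_sub, mul_add, ← hs]
    simp only [hWdef]
    ring
  rw [tsum_congr key, Summable.tsum_sub hg (hW.sub ((summable_nat_add_iff 1).2 hW)),
    tsum_telescope hW]
  congr 1
  simp [hWdef, pDist]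

end MDP3


section MDP4
variable {S A : Type*} [Fintype S] [Fintype A]
variable {P : S → A → S → ℝ} {μ : S → ℝ} {ρ : S → A → ℝ} {γ : ℝ}

variable (hP0 : ∀ s a s', 0 ≤ P s a s') (hP1 : ∀ s a, ∑ s', P s a s' = 1)
variable (hμ0 : ∀ s, 0 ≤ μ s) (hμ1 : ∑ s, μ s = 1)
variable (hρ0 : ∀ s a, 0 ≤ ρ s a) (hρ1 : ∀ s, ∑ a, ρ s a = 1)
variable (hγ0 : 0 ≤ γ) (hγ1 : γ < 1)

include hP0 hP1 hμ0 hμ1 hρ0 hρ1 hγ0 hγ1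

private lemma summable_pt (c : ℝ) (s : S) :
    Summable (fun t => γ ^ t * pDist P μ ρ t s * c) := by
  apply summable_geom_dom hγ0 hγ1 (M := |c|)
  intro t
  rw [abs_mul, abs_mul, abs_pow, abs_of_nonneg hγ0,
    abs_of_nonneg (pDist_nonneg hP0 hμ0 hρ0 t s)]
  calc γ ^ t * pDist P μ ρ t s * |c| ≤ γ ^ t * 1 * |c| := by
        refine mul_le_mul_of_nonneg_right ?_ (abs_nonneg c)
        exact mul_le_mul_of_nonneg_left (pDist_le_one hP0 hP1 hμ0 hμ1 hρ0 hρ1 t s)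
          (pow_nonneg hγ0 t)
    _ = |c| * γ ^ t := by ring

private lemma dvisit_nonneg (s : S) : 0 ≤ dvisit P μ γ ρ s := by
  refine mul_nonneg (by linarith) (tsum_nonneg fun t => ?_)
  exact mul_nonneg (pow_nonneg hγ0 t) (pDist_nonneg hP0 hμ0 hρ0 t s)

/-- swap lemma: `∑ s, dvisit s * f s = (1-γ) * ∑' t, γ^t * ∑ s, pDist t s * f s`. -/
private lemma dvisit_swap (f : S → ℝ) :
    ∑ s, dvisit P μ γ ρ s * f s = (1 - γ) * ∑' t, γ ^ t * ∑ s, pDist P μ ρ t s * f s := by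
  have h1 : ∀ s : S, dvisit P μ γ ρ s * f s
      = (1 - γ) * ∑' t, γ ^ t * pDist P μ ρ t s * f s := by
    intro s
    rw [dvisit, mul_assoc]
    congr 1
    rw [← tsum_mul_right]
  rw [Finset.sum_congr rfl fun s _ => h1 s, ← Finset.mul_sum]
  congr 1
  rw [← Summable.tsum_finsetSum (fun s _ => summable_pt hP0 hP1 hμ0 hμ1 hρ0 hρ1 hγ0 hγ1 (f s) s)]
  refine tsum_congr fun t => ?_
  rw [Finset.mul_sum]
  exact Finset.sum_congr rfl fun s _ => by ring

private lemma dvisit_sum : ∑ s, dvisit P μ γ ρ s = 1 := by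
  have := dvisit_swap hP0 hP1 hμ0 hμ1 hρ0 hρ1 hγ0 hγ1 (fun _ => (1:ℝ))
  simp only [mul_one] at this
  rw [this]
  have h2 : ∀ t : ℕ, γ ^ t * ∑ s, pDist P μ ρ t s = γ ^ t := fun t => by
    rw [pDist_sum hP1 hμ1 hρ1 t, mul_one]
  rw [tsum_congr h2, tsum_geometric_of_lt_one hγ0 hγ1]
  rw [mul_inv_cancel₀ (by linarith : (1:ℝ) - γ ≠ 0)]

/-- Bellman flow equation for the visitation distribution. -/
private lemma dvisit_flow (s' : S) :
    dvisit P μ γ ρ s' = (1 - γ) * μ s'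
      + γ * ∑ s, ∑ a, dvisit P μ γ ρ s * ρ s a * P s a s' := by
  have hsump : Summable (fun t => γ ^ t * pDist P μ ρ t s') :=
    by simpa using summable_pt hP0 hP1 hμ0 hμ1 hρ0 hρ1 hγ0 hγ1 1 s'
  have h0 : dvisit P μ γ ρ s'
      = (1 - γ) * (μ s' + ∑' t, γ ^ (t+1) * pDist P μ ρ (t+1) s') := by
    rw [dvisit, Summable.tsum_eq_zero_add hsump]
    simp [pDist]
  have h1 : ∀ t : ℕ, γ ^ (t+1) * pDist P μ ρ (t+1) s'
      = ∑ s, ∑ a, γ * (γ ^ t * pDist P μ ρ t s * ρ s a * P s a s') := by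
    intro t
    simp only [pDist, pow_succ]
    rw [Finset.mul_sum]
    refine Finset.sum_congr rfl fun s _ => ?_
    rw [Finset.mul_sum]
    exact Finset.sum_congr rfl fun a _ => by ring
  have hsum2 : ∀ (s : S) (a : A),
      Summable (fun t => γ * (γ ^ t * pDist P μ ρ t s * ρ s a * P s a s')) := by
    intro s a
    exact ((summable_pt hP0 hP1 hμ0 hμ1 hρ0 hρ1 hγ0 hγ1 (ρ s a * P s a s') s).mul_left
      γ).congr (fun t => by ring)
  have h2 : ∑' t, γ ^ (t+1) * pDist P μ ρ (t+1) s'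
      = ∑ s, ∑ a, γ * (∑' t, γ ^ t * pDist P μ ρ t s) * ρ s a * P s a s' := by
    rw [tsum_congr h1]
    rw [Summable.tsum_finsetSum (fun s _ => summable_sum fun a _ => hsum2 s a)]
    refine Finset.sum_congr rfl fun s _ => ?_
    rw [Summable.tsum_finsetSum (fun a _ => hsum2 s a)]
    refine Finset.sum_congr rfl fun a _ => ?_
    have he : (fun b : ℕ => γ * (γ ^ b * pDist P μ ρ b s * ρ s a * P s a s'))
        = fun b : ℕ => (γ ^ b * pDist P μ ρ b s) * (γ * (ρ s a * P s a s')) := by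
      funext b; ring
    rw [he, tsum_mul_right]
    ring
  rw [h0, h2]
  rw [mul_add]
  congr 1
  rw [Finset.mul_sum, Finset.mul_sum]
  refine Finset.sum_congr rfl fun s _ => ?_
  rw [Finset.mul_sum, Finset.mul_sum]
  refine Finset.sum_congr rfl fun a _ => ?_
  rw [dvisit]
  ring

end MDP4

section MDP5
variable {S A : Type*} [Fintype S] [Fintype A]
variable {P : S → A → S → ℝ} {μ : S → ℝ} {γ : ℝ} {π πt : S → A → ℝ}

private lemma l1_bound (hP0 : ∀ s a s', 0 ≤ P s a s') (hP1 : ∀ s a, ∑ s', P s a s' = 1)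
    (hμ0 : ∀ s, 0 ≤ μ s) (hμ1 : ∑ s, μ s = 1)
    (hπ0 : ∀ s a, 0 ≤ π s a) (hπ1 : ∀ s, ∑ a, π s a = 1)
    (hπt0 : ∀ s a, 0 ≤ πt s a) (hπt1 : ∀ s, ∑ a, πt s a = 1)
    (hγ0 : 0 ≤ γ) (hγ1 : γ < 1) :
    (1 - γ) * ∑ s, |dvisit P μ γ π s - dvisit P μ γ πt s|
      ≤ γ * ∑ s, dvisit P μ γ πt s * ∑ a, |π s a - πt s a| := by
  set dP := dvisit P μ γ π with hdP
  set dT := dvisit P μ γ πt with hdT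
  have he : ∀ s', |dP s' - dT s'|
      ≤ γ * ∑ s, ∑ a, (|dP s - dT s| * π s a + dT s * |π s a - πt s a|) * P s a s' := by
    intro s'
    have h1 : dP s' - dT s'
        = γ * ∑ s, ∑ a, (dP s * π s a - dT s * πt s a) * P s a s' := by
      rw [hdP, hdT, dvisit_flow hP0 hP1 hμ0 hμ1 hπ0 hπ1 hγ0 hγ1 s',
        dvisit_flow hP0 hP1 hμ0 hμ1 hπt0 hπt1 hγ0 hγ1 s']
      rw [← hdP, ← hdT]
      have : ∑ s, ∑ a, (dP s * π s a - dT s * πt s a) * P s a s'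
          = (∑ s, ∑ a, dP s * π s a * P s a s') - ∑ s, ∑ a, dT s * πt s a * P s a s' := by
        rw [← Finset.sum_sub_distrib]
        refine Finset.sum_congr rfl fun s _ => ?_
        rw [← Finset.sum_sub_distrib]
        exact Finset.sum_congr rfl fun a _ => by ring
      rw [this]
      ring
    rw [h1, abs_mul, abs_of_nonneg hγ0]
    refine mul_le_mul_of_nonneg_left ?_ hγ0
    calc |∑ s, ∑ a, (dP s * π s a - dT s * πt s a) * P s a s'|
        ≤ ∑ s, |∑ a, (dP s * π s a - dT s * πt s a) * P s a s'| :=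
          Finset.abs_sum_le_sum_abs _ _
      _ ≤ ∑ s, ∑ a, |(dP s * π s a - dT s * πt s a) * P s a s'| :=
          Finset.sum_le_sum fun s _ => Finset.abs_sum_le_sum_abs _ _
      _ ≤ ∑ s, ∑ a, (|dP s - dT s| * π s a + dT s * |π s a - πt s a|) * P s a s' := by
          refine Finset.sum_le_sum fun s _ => Finset.sum_le_sum fun a _ => ?_
          rw [abs_mul, abs_of_nonneg (hP0 s a s')]
          refine mul_le_mul_of_nonneg_right ?_ (hP0 s a s')
          have : dP s * π s a - dT s * πt s a
              = (dP s - dT s) * π s a + dT s * (π s a - πt s a) := by ring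
          rw [this]
          calc |(dP s - dT s) * π s a + dT s * (π s a - πt s a)|
              ≤ |(dP s - dT s) * π s a| + |dT s * (π s a - πt s a)| := abs_add_le _ _
            _ = |dP s - dT s| * π s a + dT s * |π s a - πt s a| := by
                rw [abs_mul, abs_mul, abs_of_nonneg (hπ0 s a),
                  abs_of_nonneg (dvisit_nonneg hP0 hP1 hμ0 hμ1 hπt0 hπt1 hγ0 hγ1 s)]
  have hsum : ∑ s', |dP s' - dT s'|
      ≤ γ * (∑ s, |dP s - dT s| + ∑ s, dT s * ∑ a, |π s a - πt s a|) := by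
    calc ∑ s', |dP s' - dT s'|
        ≤ ∑ s', γ * ∑ s, ∑ a, (|dP s - dT s| * π s a + dT s * |π s a - πt s a|) * P s a s' :=
          Finset.sum_le_sum fun s' _ => he s'
      _ = γ * ∑ s', ∑ s, ∑ a, (|dP s - dT s| * π s a + dT s * |π s a - πt s a|) * P s a s' := by
          rw [Finset.mul_sum]
      _ = γ * ∑ s, ∑ a, (|dP s - dT s| * π s a + dT s * |π s a - πt s a|) := by
          congr 1
          rw [Finset.sum_comm]
          refine Finset.sum_congr rfl fun s _ => ?_
          rw [Finset.sum_comm]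
          refine Finset.sum_congr rfl fun a _ => ?_
          rw [← Finset.mul_sum, hP1, mul_one]
      _ = γ * (∑ s, |dP s - dT s| + ∑ s, dT s * ∑ a, |π s a - πt s a|) := by
          congr 1
          rw [← Finset.sum_add_distrib]
          refine Finset.sum_congr rfl fun s _ => ?_
          rw [Finset.sum_add_distrib, ← Finset.mul_sum, ← Finset.mul_sum, hπ1, mul_one]
  nlinarith [hsum]
end MDP5

/-- **Approximate performance difference for policy-dependent reward.** With
`C_π(s,a) = log(π(s,a)/π_b(s,a))`, for any two everywhere-positive policies `π, π̃`:
`J_{C_π}(π) − J_{C_{π̃}}(π̃) ≤ (1−γ)⁻¹ ∑_s d^{π̃}(s) ∑_a π(s,a) A^{π̃}_{C_{π̃}}(s,a)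
  + (√2 γ ε_{π̃}/(1−γ)²) √(D^{π̃}_KL(π, π̃)) + (1−γ)⁻¹ D^max_KL(π, π̃)`,
where `ε_{π̃} = max_{s,a} |A^{π̃}_{C_{π̃}}(s,a)|`. -/
theorem stmt_11 {S A : Type*} [Fintype S] [Fintype A] [Nonempty S] [Nonempty A]
    (P : S → A → S → ℝ)
    (hP0 : ∀ s a s', 0 ≤ P s a s') (hP1 : ∀ s a, ∑ s', P s a s' = 1)
    (γ : ℝ) (hγ0 : 0 < γ) (hγ1 : γ < 1)
    (μ : S → ℝ) (hμ0 : ∀ s, 0 ≤ μ s) (hμ1 : ∑ s, μ s = 1)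
    (πb : S → A → ℝ) (hπb0 : ∀ s a, 0 < πb s a) (hπb1 : ∀ s, ∑ a, πb s a = 1)
    (π πt : S → A → ℝ)
    (hπ0 : ∀ s a, 0 < π s a) (hπ1 : ∀ s, ∑ a, π s a = 1)
    (hπt0 : ∀ s a, 0 < πt s a) (hπt1 : ∀ s, ∑ a, πt s a = 1)
    (Vt : S → ℝ)
    (hVt : ∀ s, Vt s = ∑ a, πt s a *
      (Real.log (πt s a / πb s a) + γ * ∑ s', P s a s' * Vt s')) :
    Jret P μ γ (fun s a => Real.log (π s a / πb s a)) π -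
        Jret P μ γ (fun s a => Real.log (πt s a / πb s a)) πt ≤
      (1 - γ)⁻¹ * ∑ s, dvisit P μ γ πt s *
          ∑ a, π s a * Adv P γ (fun s a => Real.log (πt s a / πb s a)) Vt s a +
        (Real.sqrt 2 * γ *
            (⨆ s, ⨆ a, |Adv P γ (fun s a => Real.log (πt s a / πb s a)) Vt s a|) /
          (1 - γ) ^ 2) *
          Real.sqrt (∑ s, dvisit P μ γ πt s * KL (π s) (πt s)) +
        (1 - γ)⁻¹ * (⨆ s, KL (π s) (πt s)) := by
  have hγ0' : (0:ℝ) ≤ γ := hγ0.le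
  have h1γ : (0:ℝ) < 1 - γ := by linarith
  set Ct : S → A → ℝ := fun s a => Real.log (πt s a / πb s a) with hCt
  set C : S → A → ℝ := fun s a => Real.log (π s a / πb s a) with hC
  set L : S → ℝ := fun s => ∑ a, π s a * Adv P γ Ct Vt s a with hL
  set K : S → ℝ := fun s => KL (π s) (πt s) with hK
  set dP : S → ℝ := dvisit P μ γ π with hdP
  set dT : S → ℝ := dvisit P μ γ πt with hdT
  set ε : ℝ := ⨆ s, ⨆ a, |Adv P γ Ct Vt s a| with hε
  set Kmax : ℝ := ⨆ s, K s with hKmax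
  set EKL : ℝ := ∑ s, dT s * K s with hEKL
  have hπ0' : ∀ s a, 0 ≤ π s a := fun s a => (hπ0 s a).le
  have hπt0' : ∀ s a, 0 ≤ πt s a := fun s a => (hπt0 s a).le
  -- Step 1: reward decomposition
  have hlogsplit : ∀ s a, C s a = Ct s a + Real.log (π s a / πt s a) := by
    intro s a
    rw [hC, hCt]
    simp only []
    rw [Real.log_div (hπ0 s a).ne' (hπb0 s a).ne', Real.log_div (hπt0 s a).ne' (hπb0 s a).ne',
      Real.log_div (hπ0 s a).ne' (hπt0 s a).ne']
    ring
  have hsplit : ∀ t : ℕ, γ ^ t * ∑ s, ∑ a, pDist P μ π t s * π s a * C s a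
      = γ ^ t * ∑ s, ∑ a, pDist P μ π t s * π s a * Ct s a
        + γ ^ t * ∑ s, pDist P μ π t s * K s := by
    intro t
    rw [← mul_add]
    congr 1
    rw [← Finset.sum_add_distrib]
    refine Finset.sum_congr rfl fun s _ => ?_
    have : pDist P μ π t s * K s = ∑ a, pDist P μ π t s * π s a * Real.log (π s a / πt s a) := by
      rw [hK]
      simp only [KL]
      rw [Finset.mul_sum]
      exact Finset.sum_congr rfl fun a _ => by ring
    rw [this, ← Finset.sum_add_distrib]
    refine Finset.sum_congr rfl fun a _ => ?_
    rw [hlogsplit s a]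
    ring
  have hsumJCt : Summable (fun t => γ ^ t * ∑ s, ∑ a, pDist P μ π t s * π s a * Ct s a) :=
    summable_Jterm hP0 hP1 hμ0 hμ1 hπ0' hπ1 hγ0' hγ1 Ct
  have hsumK : Summable (fun t => γ ^ t * ∑ s, pDist P μ π t s * K s) :=
    summable_pterm hP0 hP1 hμ0 hμ1 hπ0' hπ1 hγ0' hγ1 K
  have hJC : Jret P μ γ C π = Jret P μ γ Ct π + ∑' t, γ ^ t * ∑ s, pDist P μ π t s * K s := by
    rw [Jret, Jret, tsum_congr hsplit, Summable.tsum_add hsumJCt hsumK]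
  -- Step 2: the K remainder term
  have hKle : ∀ s, K s ≤ Kmax := fun s =>
    le_ciSup (Set.Finite.bddAbove (Set.finite_range K)) s
  have hKrem : ∑' t, γ ^ t * ∑ s, pDist P μ π t s * K s ≤ (1 - γ)⁻¹ * Kmax := by
    have h1 : ∀ t : ℕ, γ ^ t * ∑ s, pDist P μ π t s * K s ≤ γ ^ t * Kmax := by
      intro t
      refine mul_le_mul_of_nonneg_left ?_ (pow_nonneg hγ0' t)
      calc ∑ s, pDist P μ π t s * K s ≤ ∑ s, pDist P μ π t s * Kmax :=
            Finset.sum_le_sum fun s _ => mul_le_mul_of_nonneg_left (hKle s)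
              (pDist_nonneg hP0 hμ0 hπ0' t s)
        _ = Kmax := by rw [← Finset.sum_mul, pDist_sum hP1 hμ1 hπ1 t, one_mul]
    calc ∑' t, γ ^ t * ∑ s, pDist P μ π t s * K s ≤ ∑' t : ℕ, γ ^ t * Kmax :=
          Summable.tsum_le_tsum h1 hsumK ((summable_geometric_of_lt_one hγ0' hγ1).mul_right Kmax)
      _ = (1 - γ)⁻¹ * Kmax := by
          rw [tsum_mul_right, tsum_geometric_of_lt_one hγ0' hγ1]
  -- Step 3: baseline return
  have hJt : Jret P μ γ Ct πt = ∑ s, μ s * Vt s := by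
    rw [Jret]
    exact J_eq_muV hP0 hP1 hμ0 hμ1 hπt0' hπt1 hγ0' hγ1 Ct Vt hVt
  -- Step 4: performance difference
  have hPD : ∑' t, γ ^ t * ∑ s, pDist P μ π t s * L s
      = Jret P μ γ Ct π - ∑ s, μ s * Vt s := by
    have h := perf_diff hP0 hP1 hμ0 hμ1 hπ0' hπ1 hγ0' hγ1 Ct Vt
    rw [Jret]
    exact h
  -- Step 5: visitation form
  have hswap : ∑ s, dP s * L s = (1 - γ) * ∑' t, γ ^ t * ∑ s, pDist P μ π t s * L s := by
    rw [hdP]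
    exact dvisit_swap hP0 hP1 hμ0 hμ1 hπ0' hπ1 hγ0' hγ1 L
  have hPD2 : Jret P μ γ Ct π - Jret P μ γ Ct πt = (1 - γ)⁻¹ * ∑ s, dP s * L s := by
    rw [hswap, hJt, ← hPD]
    rw [← mul_assoc, inv_mul_cancel₀ h1γ.ne', one_mul]
  -- Step 6: advantage bounds
  have hAbound : ∀ s a, |Adv P γ Ct Vt s a| ≤ ε := by
    intro s a
    calc |Adv P γ Ct Vt s a| ≤ ⨆ a, |Adv P γ Ct Vt s a| :=
          le_ciSup (f := fun a => |Adv P γ Ct Vt s a|)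
            (Set.Finite.bddAbove (Set.finite_range _)) a
      _ ≤ ε := le_ciSup (f := fun s => ⨆ a, |Adv P γ Ct Vt s a|)
          (Set.Finite.bddAbove (Set.finite_range _)) s
  have hε0 : 0 ≤ ε :=
    le_trans (abs_nonneg _) (hAbound (Classical.arbitrary S) (Classical.arbitrary A))
  have hLb : ∀ s, |L s| ≤ ε := by
    intro s
    rw [hL]
    exact wavg_abs_le (fun a => hπ0' s a) (le_of_eq (hπ1 s)) hε0 (fun a => hAbound s a)
  have h6 : ∑ s, dP s * L s ≤ ∑ s, dT s * L s + (∑ s, |dP s - dT s|) * ε := by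
    have : ∑ s, dP s * L s - ∑ s, dT s * L s = ∑ s, (dP s - dT s) * L s := by
      rw [← Finset.sum_sub_distrib]
      exact Finset.sum_congr rfl fun s _ => by ring
    have h2 : ∑ s, (dP s - dT s) * L s ≤ (∑ s, |dP s - dT s|) * ε := by
      calc ∑ s, (dP s - dT s) * L s ≤ ∑ s, |(dP s - dT s) * L s| :=
            Finset.sum_le_sum fun s _ => le_abs_self _
        _ ≤ ∑ s, |dP s - dT s| * ε := Finset.sum_le_sum fun s _ => by
            rw [abs_mul]
            exact mul_le_mul_of_nonneg_left (hLb s) (abs_nonneg _)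
        _ = (∑ s, |dP s - dT s|) * ε := by rw [Finset.sum_mul]
    linarith
  -- Step 7: ℓ¹ bound
  have h7 : (1 - γ) * ∑ s, |dP s - dT s| ≤ γ * ∑ s, dT s * ∑ a, |π s a - πt s a| := by
    rw [hdP, hdT]
    exact l1_bound hP0 hP1 hμ0 hμ1 hπ0' hπ1 hπt0' hπt1 hγ0' hγ1
  -- Step 8: Pinsker + Cauchy-Schwarz
  have hdT0 : ∀ s, 0 ≤ dT s := fun s => dvisit_nonneg hP0 hP1 hμ0 hμ1 hπt0' hπt1 hγ0' hγ1 s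
  have hdT1 : ∑ s, dT s = 1 := dvisit_sum hP0 hP1 hμ0 hμ1 hπt0' hπt1 hγ0' hγ1
  have h8 : ∑ s, dT s * ∑ a, |π s a - πt s a| ≤ Real.sqrt (2 * EKL) := by
    set D : ℝ := ∑ s, dT s * ∑ a, |π s a - πt s a| with hD
    have hD0 : 0 ≤ D := Finset.sum_nonneg fun s _ => mul_nonneg (hdT0 s)
      (Finset.sum_nonneg fun a _ => abs_nonneg _)
    have cs := Finset.sum_mul_sq_le_sq_mul_sq Finset.univ
      (fun s => Real.sqrt (dT s)) (fun s => Real.sqrt (dT s) * ∑ a, |π s a - πt s a|)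
    have e1 : ∀ s, Real.sqrt (dT s) * (Real.sqrt (dT s) * ∑ a, |π s a - πt s a|)
        = dT s * ∑ a, |π s a - πt s a| := by
      intro s
      rw [← mul_assoc, Real.mul_self_sqrt (hdT0 s)]
    have e2 : ∀ s : S, Real.sqrt (dT s) ^ 2 = dT s := fun s => Real.sq_sqrt (hdT0 s)
    have e3 : ∀ s : S, (Real.sqrt (dT s) * ∑ a, |π s a - πt s a|) ^ 2
        = dT s * (∑ a, |π s a - πt s a|) ^ 2 := by
      intro s
      rw [mul_pow, Real.sq_sqrt (hdT0 s)]
    simp only [e1, e2, e3] at cs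
    rw [hdT1, one_mul] at cs
    have h9 : ∑ s, dT s * (∑ a, |π s a - πt s a|) ^ 2 ≤ 2 * EKL := by
      rw [hEKL, Finset.mul_sum]
      refine Finset.sum_le_sum fun s _ => ?_
      have hp := pinsker_sum (π s) (πt s) (hπ0 s) (hπt0 s) (hπ1 s) (hπt1 s)
      calc dT s * (∑ a, |π s a - πt s a|) ^ 2 ≤ dT s * (2 * K s) := by
            refine mul_le_mul_of_nonneg_left ?_ (hdT0 s)
            rw [hK]; simpa [KL] using hp
        _ = 2 * (dT s * K s) := by ring
    have hD2 : D ^ 2 ≤ 2 * EKL := le_trans cs h9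
    calc D = Real.sqrt (D ^ 2) := (Real.sqrt_sq hD0).symm
      _ ≤ Real.sqrt (2 * EKL) := Real.sqrt_le_sqrt hD2
  -- final assembly
  have hmain : Jret P μ γ C π - Jret P μ γ Ct πt
      ≤ (1 - γ)⁻¹ * ∑ s, dT s * L s
        + (1 - γ)⁻¹ * ((∑ s, |dP s - dT s|) * ε) + (1 - γ)⁻¹ * Kmax := by
    have := hPD2
    rw [hJC]
    have hstep : (1 - γ)⁻¹ * ∑ s, dP s * L s
        ≤ (1 - γ)⁻¹ * (∑ s, dT s * L s + (∑ s, |dP s - dT s|) * ε) :=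
      mul_le_mul_of_nonneg_left h6 (by positivity)
    have := hKrem
    nlinarith [hstep, hKrem, hPD2]
  have hl1 : ∑ s, |dP s - dT s| ≤ γ / (1 - γ) * Real.sqrt (2 * EKL) := by
    rw [div_mul_eq_mul_div, le_div_iff₀ h1γ]
    calc (∑ s, |dP s - dT s|) * (1 - γ) = (1 - γ) * ∑ s, |dP s - dT s| := by ring
      _ ≤ γ * ∑ s, dT s * ∑ a, |π s a - πt s a| := h7
      _ ≤ γ * Real.sqrt (2 * EKL) := mul_le_mul_of_nonneg_left h8 hγ0'
  have hterm2 : (1 - γ)⁻¹ * ((∑ s, |dP s - dT s|) * ε)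
      ≤ Real.sqrt 2 * γ * ε / (1 - γ) ^ 2 * Real.sqrt EKL := by
    have h1 : (∑ s, |dP s - dT s|) * ε ≤ (γ / (1 - γ) * Real.sqrt (2 * EKL)) * ε :=
      mul_le_mul_of_nonneg_right hl1 hε0
    have h2 : (1 - γ)⁻¹ * ((∑ s, |dP s - dT s|) * ε)
        ≤ (1 - γ)⁻¹ * ((γ / (1 - γ) * Real.sqrt (2 * EKL)) * ε) :=
      mul_le_mul_of_nonneg_left h1 (by positivity)
    refine le_trans h2 (le_of_eq ?_)
    rw [Real.sqrt_mul (by norm_num : (0:ℝ) ≤ 2)]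
    field_simp
  calc Jret P μ γ C π - Jret P μ γ Ct πt
      ≤ (1 - γ)⁻¹ * ∑ s, dT s * L s
        + (1 - γ)⁻¹ * ((∑ s, |dP s - dT s|) * ε) + (1 - γ)⁻¹ * Kmax := hmain
    _ ≤ (1 - γ)⁻¹ * ∑ s, dT s * L s
        + Real.sqrt 2 * γ * ε / (1 - γ) ^ 2 * Real.sqrt EKL + (1 - γ)⁻¹ * Kmax := by
        linarith [hterm2]
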